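/- Let θ ∈ (0, 1/2) and let Z : (0,∞) → [0,∞) be measurable with Z ∈ L²(0,∞). Suppose there exist C > 0 and t₀ ≥ 0 such that ∫_t^∞ Z(τ)² dτ ≤ C Z(t)^{1/(1−θ)} for almost every t ≥ t₀. Then Z ∈ L¹(t₀, ∞). -/

import Mathlib

open MeasureTheory

theorem stmt7 (θ : ℝ) (hθ0 : 0 < θ) (hθ : θ < 1/2)
    (Z : ℝ → ℝ) (hmeas : Measurable Z) (hnn : ∀ t, 0 ≤ Z t)
    (hL2 : IntegrableOn (fun t => Z t ^ 2) (Set.Ioi (0:ℝ)))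
    (C t₀ : ℝ) (hC : 0 < C) (ht₀ : 0 ≤ t₀)
    (hineq : ∀ᵐ t ∂(volume.restrict (Set.Ici t₀)),
      (∫ τ in Set.Ioi t, Z τ ^ 2) ≤ C * Z t ^ ((1:ℝ) / (1 - θ))) :
    IntegrableOn Z (Set.Ioi t₀) := by
  have h1θ : 0 < 1 - θ := by linarith
  have h12θ : 0 < 1 - 2*θ := by linarith
  set α : ℝ := 2 * (1 - θ) with hα
  have hα1 : 1 < α := by rw [hα]; linarith
  have hα0 : 0 < α := by linarith
  set β : ℝ := 1 / (1 - 2*θ) with hβ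
  have hβ1 : 1 < β := by rw [hβ, lt_div_iff₀ h12θ]; linarith
  have hβα : β * (α - 1) = 1 := by
    rw [hβ, hα, one_div_mul_eq_div, div_eq_one_iff_eq (ne_of_gt h12θ)]; ring
  -- the tail function
  set y : ℝ → ℝ := fun t => ∫ τ in Set.Ioi t, Z τ ^ 2 with hy
  have hynn : ∀ t, 0 ≤ y t := fun t =>
    setIntegral_nonneg measurableSet_Ioi (fun τ _ => sq_nonneg _)
  have hZ2int : ∀ t : ℝ, 0 ≤ t → IntegrableOn (fun τ => Z τ ^ 2) (Set.Ioi t) :=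
    fun t ht => hL2.mono_set (Set.Ioi_subset_Ioi ht)
  -- splitting of the tail
  have hsplit : ∀ t s : ℝ, 0 ≤ t → t ≤ s →
      y t = (∫ τ in Set.Ioc t s, Z τ ^ 2) + y s := by
    intro t s ht hts
    have h := setIntegral_union (μ := volume) (f := fun τ => Z τ ^ 2)
      (Set.Ioc_disjoint_Ioi le_rfl) measurableSet_Ioi
      ((hZ2int t ht).mono_set Set.Ioc_subset_Ioi_self) (hZ2int s (ht.trans hts))
    rw [Set.Ioc_union_Ioi_eq_Ioi hts] at h
    exact h
  have hanti : ∀ t s : ℝ, 0 ≤ t → t ≤ s → y s ≤ y t := by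
    intro t s ht hts
    have h := hsplit t s ht hts
    have h2 : 0 ≤ ∫ τ in Set.Ioc t s, Z τ ^ 2 :=
      setIntegral_nonneg measurableSet_Ioc (fun τ _ => sq_nonneg _)
    linarith
  -- key pointwise bound
  have hCα : (0:ℝ) < C ^ α := Real.rpow_pos_of_pos hC α
  have hkey : ∀ᵐ τ ∂(volume.restrict (Set.Ici t₀)), y τ ^ α ≤ C ^ α * Z τ ^ 2 := by
    filter_upwards [hineq] with τ hτ
    have hZτ := hnn τ
    have h1 : (y τ) ^ (1-θ) ≤ (C * Z τ ^ ((1:ℝ)/(1-θ))) ^ (1-θ) :=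
      Real.rpow_le_rpow (hynn τ) hτ h1θ.le
    have h2 : (C * Z τ ^ ((1:ℝ)/(1-θ))) ^ (1-θ) = C ^ (1-θ) * Z τ := by
      rw [Real.mul_rpow hC.le (Real.rpow_nonneg hZτ _), ← Real.rpow_mul hZτ,
        one_div_mul_cancel (ne_of_gt h1θ), Real.rpow_one]
    rw [h2] at h1
    have h3 : ((y τ) ^ (1-θ)) ^ (2:ℕ) ≤ (C ^ (1-θ) * Z τ) ^ (2:ℕ) :=
      pow_le_pow_left₀ (Real.rpow_nonneg (hynn τ) _) h1 2
    have e1 : ((y τ) ^ (1-θ)) ^ (2:ℕ) = y τ ^ α := by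
      rw [← Real.rpow_natCast ((y τ) ^ (1-θ)) 2, ← Real.rpow_mul (hynn τ)]
      congr 1
      push_cast
      rw [hα]; ring
    have e2 : (C ^ (1-θ) * Z τ) ^ (2:ℕ) = C ^ α * Z τ ^ 2 := by
      rw [mul_pow, ← Real.rpow_natCast (C ^ (1-θ)) 2, ← Real.rpow_mul hC.le]
      congr 2
      push_cast
      rw [hα]; ring
    rw [e1, e2] at h3
    exact h3
  -- dyadic points
  set t' : ℕ → ℝ := fun n => t₀ + (2^n - 1) with ht'
  have ht'0 : ∀ n, 0 ≤ t' n := by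
    intro n
    have : (1:ℝ) ≤ 2^n := one_le_pow₀ (by norm_num : (1:ℝ) ≤ 2)
    rw [ht']; dsimp only; linarith
  have ht'le : ∀ n, t₀ ≤ t' n := by
    intro n
    have : (1:ℝ) ≤ 2^n := one_le_pow₀ (by norm_num : (1:ℝ) ≤ 2)
    rw [ht']; dsimp only; linarith
  have ht'mono : ∀ n, t' n ≤ t' (n+1) := by
    intro n
    have : (2:ℝ)^n ≤ 2^(n+1) := by
      rw [pow_succ]
      nlinarith [pow_pos (by norm_num : (0:ℝ) < 2) n]
    rw [ht']; dsimp only; linarith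
  have ht'diff : ∀ n, t' (n+1) - t' n = 2^n := by
    intro n
    rw [ht']; dsimp only; rw [pow_succ]; ring
  set z : ℕ → ℝ := fun n => y (t' n) with hz
  have hznn : ∀ n, 0 ≤ z n := fun n => hynn _
  -- the interval integrals
  set I : ℕ → Set ℝ := fun n => Set.Ioc (t' n) (t' (n+1)) with hI
  have hIsub : ∀ n, I n ⊆ Set.Ici t₀ := by
    intro n x hx
    exact le_trans (ht'le n) (le_of_lt hx.1)
  have hIvol : ∀ n, (volume (I n)).toReal = 2^n := by
    intro n
    rw [hI]; dsimp only
    rw [Real.volume_Ioc, ENNReal.toReal_ofReal (by linarith [ht'mono n]), ht'diff n]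
  have hIvolfin : ∀ n, volume (I n) < ⊤ := fun n => measure_Ioc_lt_top
  have hZ2I : ∀ n, IntegrableOn (fun τ => Z τ ^ 2) (I n) :=
    fun n => ((hZ2int _ (ht'0 n)).mono_set Set.Ioc_subset_Ioi_self)
  have hIint : ∀ n, ∫ τ in I n, Z τ ^ 2 = z n - z (n+1) := by
    intro n
    have h := hsplit (t' n) (t' (n+1)) (ht'0 n) (ht'mono n)
    rw [hz]; dsimp only
    linarith [h]
  -- recursion
  have hrec : ∀ n : ℕ, z (n+1) + 2^n * (z (n+1) ^ α / C ^ α) ≤ z n := by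
    intro n
    have hae : ∀ᵐ τ ∂(volume.restrict (I n)), z (n+1) ^ α / C ^ α ≤ Z τ ^ 2 := by
      have h1 : ∀ᵐ τ ∂(volume.restrict (I n)), y τ ^ α ≤ C ^ α * Z τ ^ 2 :=
        (ae_mono (Measure.restrict_mono (hIsub n) le_rfl)) hkey
      filter_upwards [h1, ae_restrict_mem measurableSet_Ioc] with τ hτ hmem
      have hyz : z (n+1) ≤ y τ :=
        hanti τ (t' (n+1)) (le_trans (ht'0 n) (le_of_lt hmem.1)) hmem.2
      have : z (n+1) ^ α ≤ y τ ^ α := Real.rpow_le_rpow (hznn _) hyz hα0.le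
      rw [div_le_iff₀ hCα]
      calc z (n+1) ^ α ≤ y τ ^ α := this
        _ ≤ C ^ α * Z τ ^ 2 := hτ
        _ = Z τ ^ 2 * C ^ α := mul_comm _ _
    have hmono := integral_mono_ae (μ := volume.restrict (I n))
      (integrableOn_const (C := z (n+1) ^ α / C ^ α) (hIvolfin n).ne) (hZ2I n) hae
    rw [setIntegral_const, smul_eq_mul, measureReal_def, hIvol n, hIint n] at hmono
    linarith
  -- the constant K
  set K : ℝ := max (y t₀ + 1) ((C ^ α * 2 ^ (β+1)) ^ β) with hK
  have hK0 : 0 < K := lt_of_lt_of_le (by linarith [hynn t₀]) (le_max_left _ _)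
  have hKz : y t₀ ≤ K := le_trans (by linarith) (le_max_left _ _)
  have h2β1 : (0:ℝ) < (2:ℝ) ^ (β+1) := Real.rpow_pos_of_pos (by norm_num) _
  have hKpow : C ^ α * 2 ^ (β+1) ≤ K ^ (α-1) := by
    have he : ((C ^ α * 2 ^ (β+1)) ^ β) ^ (α-1) = C ^ α * 2 ^ (β+1) := by
      rw [← Real.rpow_mul (by positivity), hβα, Real.rpow_one]
    rw [← he]
    exact Real.rpow_le_rpow (by positivity) (le_max_right _ _) (by linarith)
  -- geometric decay of z
  set q : ℝ := (2:ℝ) ^ (-β) with hq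
  have hq0 : 0 < q := Real.rpow_pos_of_pos (by norm_num) _
  have hq1 : q < 1 := Real.rpow_lt_one_of_one_lt_of_neg (by norm_num) (by linarith)
  have hqn : ∀ n : ℕ, q ^ n = (2:ℝ) ^ (-β * n) := by
    intro n
    rw [hq, ← Real.rpow_natCast ((2:ℝ) ^ (-β)) n, ← Real.rpow_mul (by norm_num)]
  have hzK : ∀ n, z n ≤ K * q ^ n := by
    intro n
    induction n with
    | zero =>
      have ht'z : t' 0 = t₀ := by rw [ht']; norm_num
      have : z 0 = y t₀ := by rw [hz]; dsimp only; rw [ht'z]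
      rw [this, pow_zero, mul_one]
      exact hKz
    | succ n ih =>
      by_contra hcon
      push_neg at hcon
      have hq1pos : 0 < K * q ^ (n+1) := by positivity
      have hstrict : (K * q ^ (n+1)) ^ α < z (n+1) ^ α :=
        Real.rpow_lt_rpow hq1pos.le hcon hα0
      have hβα' : β * α = β + 1 := by linarith [hβα]
      have e1 : (K * q ^ (n+1)) ^ α = K ^ α * (2:ℝ) ^ (-β * (n+1) * α) := by
        rw [Real.mul_rpow hK0.le (by positivity), hqn (n+1),
          ← Real.rpow_mul (by norm_num : (0:ℝ) ≤ 2)]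
        congr 2
        push_cast; ring
      have e2 : (2:ℝ)^n * (2:ℝ) ^ (-β * (n+1) * α) = q ^ n * (2:ℝ) ^ (-(β+1)) := by
        rw [hqn n, ← Real.rpow_natCast (2:ℝ) n,
          ← Real.rpow_add (by norm_num : (0:ℝ) < 2),
          ← Real.rpow_add (by norm_num : (0:ℝ) < 2)]
        congr 1
        push_cast
        linear_combination (-(n:ℝ) - 1) * hβα'
      have e3 : K ^ α = K ^ (α - 1) * K := by
        rw [← Real.rpow_add_one (ne_of_gt hK0)]
        ring_nf
      have h2negβ : (2:ℝ) ^ (-(β+1)) = ((2:ℝ) ^ (β+1))⁻¹ := by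
        rw [← Real.rpow_neg (by norm_num : (0:ℝ) ≤ 2)]
      have hKterm : (1:ℝ) ≤ K ^ (α-1) * (2:ℝ) ^ (-(β+1)) / C ^ α := by
        rw [h2negβ, one_le_div hCα]
        have h := mul_le_mul_of_nonneg_right hKpow (inv_nonneg.2 h2β1.le)
        rwa [mul_assoc, mul_inv_cancel₀ (ne_of_gt h2β1), mul_one] at h
      have hcomp : K * q ^ n ≤ 2^n * ((K * q ^ (n+1)) ^ α / C ^ α) := by
        calc K * q ^ n = q ^ n * (K * 1) := by ring
          _ ≤ q ^ n * (K * (K ^ (α-1) * (2:ℝ) ^ (-(β+1)) / C ^ α)) := by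
              apply mul_le_mul_of_nonneg_left _ (pow_nonneg hq0.le n)
              exact mul_le_mul_of_nonneg_left hKterm hK0.le
          _ = (2^n * (2:ℝ) ^ (-β * (n+1) * α)) * K ^ α / C ^ α := by
              rw [e2, e3]; ring
          _ = 2^n * ((K * q ^ (n+1)) ^ α / C ^ α) := by rw [e1]; ring
      have h2n : (0:ℝ) < 2^n := pow_pos (by norm_num) n
      have hstep : K * q ^ n < z n := by
        calc K * q ^ n ≤ 2^n * ((K * q ^ (n+1)) ^ α / C ^ α) := hcomp
          _ ≤ 2^n * (z (n+1) ^ α / C ^ α) := by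
              apply mul_le_mul_of_nonneg_left _ h2n.le
              exact (div_le_div_iff_of_pos_right hCα).mpr hstrict.le
          _ < z (n+1) + 2^n * (z (n+1) ^ α / C ^ α) := by linarith
          _ ≤ z n := hrec n
      exact absurd hstep (not_lt.2 ih)
  -- per-interval bound on the integral of Z
  set r : ℝ := (2:ℝ) ^ ((1-β)/2) with hr
  have hr0 : 0 < r := Real.rpow_pos_of_pos (by norm_num) _
  have hr1 : r < 1 := Real.rpow_lt_one_of_one_lt_of_neg (by norm_num) (by linarith)
  have hrn : ∀ n : ℕ, r ^ n = (2:ℝ) ^ ((1-β)/2 * n) := by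
    intro n
    rw [hr, ← Real.rpow_natCast ((2:ℝ) ^ ((1-β)/2)) n, ← Real.rpow_mul (by norm_num)]
  have hbound : ∀ n : ℕ, IntegrableOn Z (I n) ∧
      ∫ τ in I n, Z τ ≤ (1 + K) * r ^ n := by
    intro n
    set ε : ℝ := (2:ℝ) ^ (-(1+β)/2 * n) with hε
    have hε0 : 0 < ε := Real.rpow_pos_of_pos (by norm_num) _
    have hptwise : ∀ τ, Z τ ≤ ε + Z τ ^ 2 / ε := by
      intro τ
      have h2 : Z τ * ε ≤ (ε + Z τ ^ 2 / ε) * ε := by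
        have : Z τ ^ 2 / ε * ε = Z τ ^ 2 := div_mul_cancel₀ _ (ne_of_gt hε0)
        nlinarith [sq_nonneg (Z τ - ε), hnn τ]
      exact le_of_mul_le_mul_right h2 hε0
    have hgint : IntegrableOn (fun τ => ε + Z τ ^ 2 / ε) (I n) := by
      apply Integrable.add
      · exact integrableOn_const (hIvolfin n).ne
      · exact (hZ2I n).div_const ε
    have hZint : IntegrableOn Z (I n) := by
      apply hgint.mono' (hmeas.aestronglyMeasurable.restrict)
      filter_upwards with τ
      rw [Real.norm_eq_abs, abs_of_nonneg (hnn τ)]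
      exact hptwise τ
    refine ⟨hZint, ?_⟩
    have hmono := integral_mono_ae (μ := volume.restrict (I n)) hZint hgint
      (Filter.Eventually.of_forall hptwise)
    have hsplitI : ∫ τ in I n, (ε + Z τ ^ 2 / ε) = 2^n * ε + (z n - z (n+1)) / ε := by
      rw [integral_add (integrableOn_const (C := ε) (hIvolfin n).ne) ((hZ2I n).div_const ε),
        setIntegral_const, smul_eq_mul, measureReal_def, hIvol n, integral_div, hIint n]
    rw [hsplitI] at hmono
    have hb1 : (2:ℝ)^n * ε = r ^ n := by
      rw [hrn n, hε, ← Real.rpow_natCast (2:ℝ) n, ← Real.rpow_add (by norm_num : (0:ℝ) < 2)]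
      congr 1
      push_cast; ring
    have hb2 : (z n - z (n+1)) / ε ≤ K * r ^ n := by
      have hzn : z n - z (n+1) ≤ K * q ^ n := by
        have := hznn (n+1); linarith [hzK n]
      have h1 : (z n - z (n+1)) / ε ≤ K * q ^ n / ε :=
        (div_le_div_iff_of_pos_right hε0).mpr hzn
      have h2 : K * q ^ n / ε = K * r ^ n := by
        rw [hqn n, hrn n, hε, div_eq_mul_inv, ← Real.rpow_neg (by norm_num : (0:ℝ) ≤ 2),
          mul_assoc, ← Real.rpow_add (by norm_num : (0:ℝ) < 2)]
        congr 2
        push_cast; ring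
      linarith [h1, h2.le, h2.ge]
    calc ∫ τ in I n, Z τ ≤ 2^n * ε + (z n - z (n+1)) / ε := hmono
      _ ≤ r ^ n + K * r ^ n := by rw [hb1] at *; linarith
      _ = (1 + K) * r ^ n := by ring
  -- covering
  have hcover : Set.Ioi t₀ ⊆ ⋃ n, I n := by
    intro x hx
    have hx' : t₀ < x := hx
    have hex : ∃ n : ℕ, x ≤ t' (n+1) := by
      obtain ⟨m, hm⟩ := pow_unbounded_of_one_lt (x - t₀ + 1) (by norm_num : (1:ℝ) < 2)
      refine ⟨m, ?_⟩
      have h2m : (2:ℝ)^m ≤ 2^(m+1) := by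
        rw [pow_succ]; nlinarith [pow_pos (by norm_num : (0:ℝ) < 2) m]
      rw [ht']; dsimp only
      linarith
    classical
    let n := Nat.find hex
    have hn2 : x ≤ t' (n+1) := Nat.find_spec hex
    have hn1 : t' n < x := by
      rcases Nat.eq_zero_or_pos n with h0 | hpos
      · rw [h0]
        have : t' 0 = t₀ := by rw [ht']; norm_num
        rw [this]; exact hx'
      · obtain ⟨m, hm⟩ := Nat.exists_eq_succ_of_ne_zero (Nat.pos_iff_ne_zero.mp hpos)
        have hmlt : m < n := by omega
        have := Nat.find_min hex hmlt
        push_neg at this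
        rw [hm]
        exact this
    exact Set.mem_iUnion.mpr ⟨n, hn1, hn2⟩
  -- conclusion via lintegral
  constructor
  · exact hmeas.aestronglyMeasurable.restrict
  · rw [hasFiniteIntegral_iff_ofReal (Filter.Eventually.of_forall hnn)]
    calc ∫⁻ x in Set.Ioi t₀, ENNReal.ofReal (Z x)
        ≤ ∫⁻ x in ⋃ n, I n, ENNReal.ofReal (Z x) := lintegral_mono_set hcover
      _ ≤ ∑' n, ∫⁻ x in I n, ENNReal.ofReal (Z x) := lintegral_iUnion_le _ _
      _ ≤ ∑' n : ℕ, ENNReal.ofReal (1 + K) * (ENNReal.ofReal r) ^ n := by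
          apply ENNReal.tsum_le_tsum
          intro n
          rw [← ofReal_integral_eq_lintegral_ofReal (hbound n).1
            (Filter.Eventually.of_forall hnn)]
          calc ENNReal.ofReal (∫ τ in I n, Z τ)
              ≤ ENNReal.ofReal ((1 + K) * r ^ n) := ENNReal.ofReal_le_ofReal (hbound n).2
            _ = ENNReal.ofReal (1 + K) * (ENNReal.ofReal r) ^ n := by
                rw [ENNReal.ofReal_mul (by linarith), ENNReal.ofReal_pow hr0.le]
      _ = ENNReal.ofReal (1 + K) * (1 - ENNReal.ofReal r)⁻¹ := by
          rw [ENNReal.tsum_mul_left, ENNReal.tsum_geometric]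
      _ < ⊤ := by
          apply ENNReal.mul_lt_top ENNReal.ofReal_lt_top
          rw [ENNReal.inv_lt_top]
          rw [tsub_pos_iff_lt]
          exact ENNReal.ofReal_lt_one.mpr hr1
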